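/- Let A_x, A_y be real symmetric negative semidefinite matrices, M_x, M_y, M_z positive definite diagonal matrices, and A_z real symmetric negative semidefinite. If λ < 0, then the matrix A = A_x⊗M_y⊗M_z + M_x⊗A_y⊗M_z + M_x⊗M_y⊗A_z + λ M_x⊗M_y⊗M_z is symmetric negative definite, and in particular invertible. -/

import Mathlib

open Matrix Kronecker

lemma quad_expand {n : Type*} [Fintype n] (A : Matrix n n ℝ) (x : n → ℝ) :
    x ⬝ᵥ A.mulVec x = ∑ p, ∑ q, x p * A p q * x q := by
  simp [dotProduct, mulVec, Finset.mul_sum, mul_assoc]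

lemma quad_diag {n : Type*} [Fintype n] [DecidableEq n] (D : Matrix n n ℝ) (hD : D.IsDiag)
    (x : n → ℝ) : x ⬝ᵥ D.mulVec x = ∑ p, D p p * x p ^ 2 := by
  rw [quad_expand]
  refine Finset.sum_congr rfl fun p _ => ?_
  rw [Finset.sum_eq_single p]
  · ring
  · intro q _ hq; rw [hD (Ne.symm hq)]; ring
  · simp

lemma quad_kron_left {n m : Type*} [Fintype n] [Fintype m] [DecidableEq m]
    (A : Matrix n n ℝ) (M : Matrix m m ℝ) (hM : M.IsDiag)
    (x : n × m → ℝ) :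
    x ⬝ᵥ (A ⊗ₖ M).mulVec x
      = ∑ j, M j j * ((fun i => x (i, j)) ⬝ᵥ A.mulVec (fun i => x (i, j))) := by
  rw [quad_expand]
  have : ∀ j, M j j * ((fun i => x (i, j)) ⬝ᵥ A.mulVec (fun i => x (i, j)))
      = ∑ i, ∑ i', x (i, j) * (A i i' * M j j) * x (i', j) := by
    intro j
    rw [quad_expand, Finset.mul_sum]
    refine Finset.sum_congr rfl fun i _ => ?_
    rw [Finset.mul_sum]
    exact Finset.sum_congr rfl fun i' _ => by ring
  simp only [this]
  rw [Fintype.sum_prod_type, Finset.sum_comm]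
  refine Finset.sum_congr rfl fun j _ => ?_
  refine Finset.sum_congr rfl fun i _ => ?_
  rw [Fintype.sum_prod_type]
  refine Finset.sum_congr rfl fun i' _ => ?_
  rw [Finset.sum_eq_single j]
  · simp [kroneckerMap_apply]
  · intro j' _ hj'; simp [kroneckerMap_apply, hM (Ne.symm hj')]
  · simp

lemma quad_kron_right {n m : Type*} [Fintype n] [Fintype m] [DecidableEq n]
    (M : Matrix n n ℝ) (A : Matrix m m ℝ) (hM : M.IsDiag)
    (x : n × m → ℝ) :
    x ⬝ᵥ (M ⊗ₖ A).mulVec x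
      = ∑ i, M i i * ((fun j => x (i, j)) ⬝ᵥ A.mulVec (fun j => x (i, j))) := by
  rw [quad_expand]
  have : ∀ i, M i i * ((fun j => x (i, j)) ⬝ᵥ A.mulVec (fun j => x (i, j)))
      = ∑ j, ∑ j', x (i, j) * (M i i * A j j') * x (i, j') := by
    intro i
    rw [quad_expand, Finset.mul_sum]
    refine Finset.sum_congr rfl fun j _ => ?_
    rw [Finset.mul_sum]
    exact Finset.sum_congr rfl fun j' _ => by ring
  simp only [this]
  rw [Fintype.sum_prod_type]
  refine Finset.sum_congr rfl fun i _ => ?_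
  refine Finset.sum_congr rfl fun j _ => ?_
  rw [Fintype.sum_prod_type, Finset.sum_eq_single i]
  · simp [kroneckerMap_apply]
  · intro i' _ hi'; simp [kroneckerMap_apply, hM (Ne.symm hi')]
  · simp

lemma isSymm_kron {n m : Type*} {A : Matrix n n ℝ} {B : Matrix m m ℝ}
    (hA : A.IsSymm) (hB : B.IsSymm) : (A ⊗ₖ B).IsSymm := by
  ext ⟨i, j⟩ ⟨i', j'⟩
  simp only [Matrix.transpose_apply, kroneckerMap_apply]
  rw [hA.apply, hB.apply]

/-- If `Ax, Ay, Az` are symmetric negative semidefinite, the `M`'s are positive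
definite diagonal, and `λ < 0`, then the separable operator `A` is symmetric
negative definite, hence invertible. -/
theorem stmt6 {nx ny nz : ℕ}
    (Ax Mx : Matrix (Fin nx) (Fin nx) ℝ)
    (Ay My : Matrix (Fin ny) (Fin ny) ℝ)
    (Az Mz : Matrix (Fin nz) (Fin nz) ℝ) (lam : ℝ)
    (hAxs : Ax.IsSymm) (hAys : Ay.IsSymm) (hAzs : Az.IsSymm)
    (hAx : ∀ x, x ⬝ᵥ Ax.mulVec x ≤ 0)
    (hAy : ∀ x, x ⬝ᵥ Ay.mulVec x ≤ 0)
    (hAz : ∀ x, x ⬝ᵥ Az.mulVec x ≤ 0)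
    (hMx : Mx.IsDiag) (hMy : My.IsDiag) (hMz : Mz.IsDiag)
    (hMxp : ∀ i, 0 < Mx i i) (hMyp : ∀ j, 0 < My j j) (hMzp : ∀ k, 0 < Mz k k)
    (hlam : lam < 0) :
    (Ax ⊗ₖ (My ⊗ₖ Mz) + Mx ⊗ₖ (Ay ⊗ₖ Mz) + Mx ⊗ₖ (My ⊗ₖ Az)
        + lam • (Mx ⊗ₖ (My ⊗ₖ Mz))).IsSymm
    ∧ (∀ x : Fin nx × Fin ny × Fin nz → ℝ, x ≠ 0 →
        x ⬝ᵥ (Ax ⊗ₖ (My ⊗ₖ Mz) + Mx ⊗ₖ (Ay ⊗ₖ Mz) + Mx ⊗ₖ (My ⊗ₖ Az)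
          + lam • (Mx ⊗ₖ (My ⊗ₖ Mz))).mulVec x < 0)
    ∧ IsUnit (Ax ⊗ₖ (My ⊗ₖ Mz) + Mx ⊗ₖ (Ay ⊗ₖ Mz) + Mx ⊗ₖ (My ⊗ₖ Az)
        + lam • (Mx ⊗ₖ (My ⊗ₖ Mz))).det := by
  have hneg : ∀ x : Fin nx × Fin ny × Fin nz → ℝ, x ≠ 0 →
      x ⬝ᵥ (Ax ⊗ₖ (My ⊗ₖ Mz) + Mx ⊗ₖ (Ay ⊗ₖ Mz) + Mx ⊗ₖ (My ⊗ₖ Az)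
        + lam • (Mx ⊗ₖ (My ⊗ₖ Mz))).mulVec x < 0 := by
    intro x hx
    simp only [add_mulVec, dotProduct_add, smul_mulVec, dotProduct_smul,
      smul_eq_mul]
    have h1 : x ⬝ᵥ (Ax ⊗ₖ (My ⊗ₖ Mz)).mulVec x ≤ 0 := by
      rw [quad_kron_left Ax (My ⊗ₖ Mz) (hMy.kronecker hMz)]
      refine Finset.sum_nonpos fun p _ => mul_nonpos_of_nonneg_of_nonpos ?_ (hAx _)
      exact le_of_lt (mul_pos (hMyp p.1) (hMzp p.2))
    have h2 : x ⬝ᵥ (Mx ⊗ₖ (Ay ⊗ₖ Mz)).mulVec x ≤ 0 := by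
      rw [quad_kron_right Mx (Ay ⊗ₖ Mz) hMx]
      refine Finset.sum_nonpos fun i _ => mul_nonpos_of_nonneg_of_nonpos (le_of_lt (hMxp i)) ?_
      rw [quad_kron_left Ay Mz hMz]
      exact Finset.sum_nonpos fun k _ =>
        mul_nonpos_of_nonneg_of_nonpos (le_of_lt (hMzp k)) (hAy _)
    have h3 : x ⬝ᵥ (Mx ⊗ₖ (My ⊗ₖ Az)).mulVec x ≤ 0 := by
      rw [quad_kron_right Mx (My ⊗ₖ Az) hMx]
      refine Finset.sum_nonpos fun i _ => mul_nonpos_of_nonneg_of_nonpos (le_of_lt (hMxp i)) ?_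
      rw [quad_kron_right My Az hMy]
      exact Finset.sum_nonpos fun j _ =>
        mul_nonpos_of_nonneg_of_nonpos (le_of_lt (hMyp j)) (hAz _)
    have h4 : 0 < x ⬝ᵥ (Mx ⊗ₖ (My ⊗ₖ Mz)).mulVec x := by
      rw [quad_diag _ (hMx.kronecker (hMy.kronecker hMz))]
      obtain ⟨p, hp⟩ := Function.ne_iff.mp hx
      have hpos : ∀ p : Fin nx × Fin ny × Fin nz,
          0 < (Mx ⊗ₖ (My ⊗ₖ Mz)) p p := fun p =>
        mul_pos (hMxp p.1) (mul_pos (hMyp p.2.1) (hMzp p.2.2))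
      refine Finset.sum_pos' (fun q _ => mul_nonneg (le_of_lt (hpos q)) (sq_nonneg _)) ?_
      refine ⟨p, Finset.mem_univ p, mul_pos (hpos p) ?_⟩
      have : x p ≠ 0 := by simpa using hp
      positivity
    nlinarith
  refine ⟨?_, hneg, ?_⟩
  · exact (((isSymm_kron hAxs (isSymm_kron hMy.isSymm hMz.isSymm)).add
      (isSymm_kron hMx.isSymm (isSymm_kron hAys hMz.isSymm))).add
      (isSymm_kron hMx.isSymm (isSymm_kron hMy.isSymm hAzs))).add
      ((isSymm_kron hMx.isSymm (isSymm_kron hMy.isSymm hMz.isSymm)).smul lam)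
  · rw [isUnit_iff_ne_zero, ← Matrix.nondegenerate_iff_det_ne_zero]
    rw [Matrix.nondegenerate_def]
    constructor <;> intro v hv <;> by_contra hv0 <;>
    exact absurd (hv v) (ne_of_lt (hneg v hv0))
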